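/- arXiv:2502.02006 — 3 statements merged into one kernel-verified Lean document; each statement's English description precedes it below -/
import Mathlib

section
/- The Hilbert transform of the semicircular kernel k(x) = (1/(2π))√((4−x²)₊) is K(x) = (1/(2π))(−x + sign(x)·√((x²−4)₊)); that is, for every real x, p.v. (1/π) ∫ k(t)/(t−x) dt = (1/(2π))(−x + sign(x)·√((x²−4)₊)). -/
open MeasureTheory Filter Set

/-- The semicircular kernel `k(x) = (1/(2π))√((4−x²)₊)`. -/
noncomputable def semicircK (x : ℝ) : ℝ := (1 / (2 * Real.pi)) * Real.sqrt (max (4 - x ^ 2) 0)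

/-- Its claimed Hilbert transform `K(x) = (1/(2π))(−x + sign(x)√((x²−4)₊))`. -/
noncomputable def semicircHK (x : ℝ) : ℝ :=
  (1 / (2 * Real.pi)) * (-x + Real.sign x * Real.sqrt (max (x ^ 2 - 4) 0))

lemma semicircK_eq_zero {t : ℝ} (ht : t ∉ Icc (-2:ℝ) 2) : semicircK t = 0 := by
  have h : 4 - t ^ 2 ≤ 0 := by
    simp only [mem_Icc, not_and_or, not_le] at ht
    rcases ht with h | h <;> nlinarith
  simp [semicircK, max_eq_right h]

lemma semicircK_eq {t : ℝ} (ht : t ∈ Icc (-2:ℝ) 2) :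
    semicircK t = (1 / (2 * Real.pi)) * Real.sqrt (4 - t ^ 2) := by
  obtain ⟨h1, h2⟩ := ht
  have : (0:ℝ) ≤ 4 - t ^ 2 := by nlinarith
  simp [semicircK, max_eq_left this]

lemma continuous_semicircK : Continuous semicircK := by
  unfold semicircK
  fun_prop

lemma hasDerivAt_sqrt4 {t : ℝ} (h : t ^ 2 < 4) :
    HasDerivAt (fun t => Real.sqrt (4 - t ^ 2)) (-t / Real.sqrt (4 - t ^ 2)) t := by
  have h1 : (0:ℝ) < 4 - t ^ 2 := by linarith
  have h2 : Real.sqrt (4 - t ^ 2) ≠ 0 := by positivity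
  have hd : HasDerivAt (fun t : ℝ => 4 - t ^ 2) (-(2 * t)) t := by
    simpa using ((hasDerivAt_pow 2 t).const_sub 4)
  have := (Real.hasDerivAt_sqrt h1.ne').comp t hd
  refine this.congr_deriv (Eq.symm ?_)
  field_simp

lemma hasDerivAt_arcsin_half {t : ℝ} (ht : t ∈ Ioo (-2:ℝ) 2) :
    HasDerivAt (fun t => Real.arcsin (t / 2)) (1 / Real.sqrt (4 - t ^ 2)) t := by
  obtain ⟨h1, h2⟩ := ht
  have hne1 : t / 2 ≠ -1 := by intro h; rw [div_eq_iff (by norm_num)] at h; linarith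
  have hne2 : t / 2 ≠ 1 := by intro h; rw [div_eq_iff (by norm_num)] at h; linarith
  have hd : HasDerivAt (fun t : ℝ => t / 2) (1 / 2) t := by
    simpa using (hasDerivAt_id t).div_const 2
  have := (Real.hasDerivAt_arcsin hne1 hne2).comp t hd
  refine this.congr_deriv (Eq.symm ?_)
  have h4 : 1 - (t / 2) ^ 2 = (4 - t ^ 2) / 4 := by ring
  have h5 : Real.sqrt ((4 - t ^ 2) / 4) = Real.sqrt (4 - t ^ 2) / 2 := by
    rw [Real.sqrt_div' _ (by norm_num : (0:ℝ) ≤ 4),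
      show Real.sqrt 4 = 2 by rw [show (4:ℝ) = 2^2 by norm_num, Real.sqrt_sq (by norm_num)]]
  rw [h4, h5]
  have hpos : (0:ℝ) < 4 - t ^ 2 := by nlinarith
  have : Real.sqrt (4 - t ^ 2) ≠ 0 := by positivity
  field_simp

/-- Regular part of the antiderivative in the inner case `|x| < 2`. -/
noncomputable def Phi (x t : ℝ) : ℝ :=
  Real.sqrt (4 - t ^ 2) - x * Real.arcsin (t / 2)
    - Real.sqrt (4 - x ^ 2) *
        Real.log (4 - x * t + Real.sqrt (4 - x ^ 2) * Real.sqrt (4 - t ^ 2))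

/-- Full antiderivative in the inner case. -/
noncomputable def Gfun (x t : ℝ) : ℝ :=
  Phi x t + Real.sqrt (4 - x ^ 2) * Real.log (t - x)

lemma Npos {x t : ℝ} (hx : x ^ 2 < 4) (ht : t ∈ Icc (-2:ℝ) 2) :
    0 < 4 - x * t + Real.sqrt (4 - x ^ 2) * Real.sqrt (4 - t ^ 2) := by
  obtain ⟨h1, h2⟩ := ht
  have hx2 : |x| < 2 := by
    rw [abs_lt]; constructor <;> nlinarith
  have ht2 : |t| ≤ 2 := by rw [abs_le]; constructor <;> linarith
  have : x * t ≤ |x| * |t| := le_trans (le_abs_self _) (by rw [abs_mul])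
  have h3 : x * t < 4 := lt_of_le_of_lt this (by nlinarith [abs_nonneg x, abs_nonneg t])
  have h4 : (0:ℝ) ≤ Real.sqrt (4 - x ^ 2) * Real.sqrt (4 - t ^ 2) := by positivity
  linarith

lemma hasDerivAt_Gfun {x t : ℝ} (hx : x ^ 2 < 4) (ht : t ∈ Ioo (-2:ℝ) 2) (hne : t ≠ x) :
    HasDerivAt (Gfun x) (Real.sqrt (4 - t ^ 2) / (t - x)) t := by
  obtain ⟨h1, h2⟩ := ht
  have ht4 : t ^ 2 < 4 := by nlinarith
  have hu : (0:ℝ) < 4 - t ^ 2 := by linarith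
  have hs : (0:ℝ) < 4 - x ^ 2 := by linarith
  set u := Real.sqrt (4 - t ^ 2) with hu_def
  set s := Real.sqrt (4 - x ^ 2) with hs_def
  have hu0 : 0 < u := Real.sqrt_pos.2 hu
  have hs0 : 0 < s := Real.sqrt_pos.2 hs
  have hu2 : u ^ 2 = 4 - t ^ 2 := Real.sq_sqrt hu.le
  have hs2 : s ^ 2 = 4 - x ^ 2 := Real.sq_sqrt hs.le
  have htx : t - x ≠ 0 := sub_ne_zero.2 hne
  have hN : 0 < 4 - x * t + s * u := Npos hx ⟨h1.le, h2.le⟩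
  -- derivative of sqrt part
  have d1 : HasDerivAt (fun t => Real.sqrt (4 - t ^ 2)) (-t / u) t := hasDerivAt_sqrt4 ht4
  have d2 : HasDerivAt (fun t => Real.arcsin (t / 2)) (1 / u) t := hasDerivAt_arcsin_half ⟨h1, h2⟩
  have d3 : HasDerivAt (fun t => 4 - x * t + s * Real.sqrt (4 - t ^ 2))
      (-x + s * (-t / u)) t := by
    have : HasDerivAt (fun t : ℝ => 4 - x * t) (-x) t := by
      simpa using ((hasDerivAt_id t).const_mul x).const_sub 4
    exact this.add (d1.const_mul s)
  have d4 : HasDerivAt (fun t => Real.log (4 - x * t + s * Real.sqrt (4 - t ^ 2)))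
      ((-x + s * (-t / u)) / (4 - x * t + s * u)) t := by
    have := d3.log hN.ne'
    simpa using this
  have d5 : HasDerivAt (fun t : ℝ => Real.log (t - x)) (1 / (t - x)) t := by
    have hd : HasDerivAt (fun t : ℝ => t - x) 1 t := (hasDerivAt_id t).sub_const x
    simpa using hd.log htx
  have := ((d1.sub (d2.const_mul x)).sub (d4.const_mul s)).add (d5.const_mul s)
  refine this.congr_deriv (Eq.symm ?_)
  have hNne : (4 : ℝ) - x * t + s * u ≠ 0 := hN.ne'
  have hune : u ≠ 0 := hu0.ne'
  rw [eq_comm, ← sub_eq_zero]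
  have expand : (-t / u - x * (1 / u) - s * ((-x + s * (-t / u)) / (4 - x*t + s*u)) + s * (1/(t-x))) - u/(t-x)
      = ((-t-x)*(4-x*t+s*u)*(t-x) - s*((-x)*u - s*t)*(t-x) + s*u*(4-x*t+s*u) - u^2*(4-x*t+s*u))
        / (u*(4-x*t+s*u)*(t-x)) := by
    generalize (4:ℝ) - x * t + s * u = N at hNne ⊢
    field_simp
    ring
  rw [expand, div_eq_zero_iff]
  left
  linear_combination (-4 + s^2 - u*s + t*x) * hu2 + (4 - t*x) * hs2

/-- Antiderivative for the outer case, `x > 2`. -/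
noncomputable def Hpos (x t : ℝ) : ℝ :=
  Real.sqrt (4 - t ^ 2) - x * Real.arcsin (t / 2)
    - Real.sqrt (x ^ 2 - 4) * Real.arcsin ((4 - x * t) / (2 * (x - t)))

/-- Antiderivative for the outer case, `x < -2`. -/
noncomputable def Hneg (x t : ℝ) : ℝ :=
  Real.sqrt (4 - t ^ 2) - x * Real.arcsin (t / 2)
    + Real.sqrt (x ^ 2 - 4) * Real.arcsin ((4 - x * t) / (2 * (x - t)))

lemma hasDerivAt_w {x t : ℝ} (hxt : x - t ≠ 0) :
    HasDerivAt (fun t => (4 - x * t) / (2 * (x - t))) ((4 - x ^ 2) / (2 * (x - t) ^ 2)) t := by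
  have hnum : HasDerivAt (fun t : ℝ => 4 - x * t) (-x) t := by
    simpa using ((hasDerivAt_id t).const_mul x).const_sub 4
  have hden : HasDerivAt (fun t : ℝ => 2 * (x - t)) (-2) t := by
    simpa using (((hasDerivAt_id t).const_sub x).const_mul 2)
  have := hnum.div hden (by simpa using mul_ne_zero (two_ne_zero) hxt)
  refine this.congr_deriv (Eq.symm ?_)
  field_simp
  ring

lemma wsq_lt_one {x t : ℝ} (hx : 4 < x ^ 2) (ht : t ∈ Ioo (-2:ℝ) 2) :
    ((4 - x * t) / (2 * (x - t))) ^ 2 < 1 := by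
  obtain ⟨h1, h2⟩ := ht
  have ht4 : t ^ 2 < 4 := by nlinarith
  have hxt : (x - t) ^ 2 > 0 := by
    have : x - t ≠ 0 := by intro h; nlinarith [sub_eq_zero.1 h]
    positivity
  have key : 4 * (x - t) ^ 2 - (4 - x * t) ^ 2 = (x ^ 2 - 4) * (4 - t ^ 2) := by ring
  have hpos : 0 < (x ^ 2 - 4) * (4 - t ^ 2) := by nlinarith
  have hd : (0:ℝ) < (2 * (x - t)) ^ 2 := by nlinarith
  rw [div_pow, div_lt_one hd]
  nlinarith

lemma sqrt_one_sub_wsq {x t : ℝ} (hx : 4 < x ^ 2) (ht : t ∈ Ioo (-2:ℝ) 2) :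
    Real.sqrt (1 - ((4 - x * t) / (2 * (x - t))) ^ 2)
      = Real.sqrt (x ^ 2 - 4) * Real.sqrt (4 - t ^ 2) / (2 * |x - t|) := by
  obtain ⟨h1, h2⟩ := ht
  have ht4 : t ^ 2 < 4 := by nlinarith
  have hxt : x - t ≠ 0 := by intro h; nlinarith [sub_eq_zero.1 h]
  have h1w : 1 - ((4 - x * t) / (2 * (x - t))) ^ 2
      = (Real.sqrt (x ^ 2 - 4) * Real.sqrt (4 - t ^ 2) / (2 * |x - t|)) ^ 2 := by
    have hr : Real.sqrt (x ^ 2 - 4) ^ 2 = x ^ 2 - 4 := Real.sq_sqrt (by linarith)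
    have hu : Real.sqrt (4 - t ^ 2) ^ 2 = 4 - t ^ 2 := Real.sq_sqrt (by linarith)
    have habs : |x - t| ^ 2 = (x - t) ^ 2 := sq_abs _
    have habsne : |x - t| ≠ 0 := abs_ne_zero.2 hxt
    field_simp
    rw [hr, hu, habs]
    ring
  rw [h1w]
  have hnn : (0:ℝ) ≤ Real.sqrt (x ^ 2 - 4) * Real.sqrt (4 - t ^ 2) / (2 * |x - t|) := by positivity
  exact Real.sqrt_sq hnn

lemma hasDerivAt_Hpos {x t : ℝ} (hx : 2 < x) (ht : t ∈ Ioo (-2:ℝ) 2) :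
    HasDerivAt (Hpos x) (Real.sqrt (4 - t ^ 2) / (t - x)) t := by
  obtain ⟨h1, h2⟩ := ht
  have hx4 : 4 < x ^ 2 := by nlinarith
  have ht4 : t ^ 2 < 4 := by nlinarith
  have hu : (0:ℝ) < 4 - t ^ 2 := by linarith
  have hxt : 0 < x - t := by linarith
  have hxt' : x - t ≠ 0 := hxt.ne'
  set u := Real.sqrt (4 - t ^ 2) with hu_def
  set r := Real.sqrt (x ^ 2 - 4) with hr_def
  have hu0 : 0 < u := Real.sqrt_pos.2 hu
  have hr0 : 0 < r := Real.sqrt_pos.2 (by linarith)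
  have hu2 : u ^ 2 = 4 - t ^ 2 := Real.sq_sqrt hu.le
  have hr2 : r ^ 2 = x ^ 2 - 4 := Real.sq_sqrt (by linarith)
  have d1 : HasDerivAt (fun t => Real.sqrt (4 - t ^ 2)) (-t / u) t := hasDerivAt_sqrt4 ht4
  have d2 : HasDerivAt (fun t => Real.arcsin (t / 2)) (1 / u) t := hasDerivAt_arcsin_half ⟨h1, h2⟩
  have hw2 := wsq_lt_one hx4 ⟨h1, h2⟩
  have hwne1 : (4 - x * t) / (2 * (x - t)) ≠ -1 := by
    intro h; rw [h] at hw2; norm_num at hw2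
  have hwne2 : (4 - x * t) / (2 * (x - t)) ≠ 1 := by
    intro h; rw [h] at hw2; norm_num at hw2
  have d3 : HasDerivAt (fun t => Real.arcsin ((4 - x * t) / (2 * (x - t))))
      ((1 / Real.sqrt (1 - ((4 - x * t) / (2 * (x - t))) ^ 2)) * ((4 - x ^ 2) / (2 * (x - t) ^ 2))) t :=
    by have := (Real.hasDerivAt_arcsin hwne1 hwne2).comp t (hasDerivAt_w hxt'); exact this
  have := (d1.sub (d2.const_mul x)).sub (d3.const_mul r)
  refine this.congr_deriv (Eq.symm ?_)
  rw [sqrt_one_sub_wsq hx4 ⟨h1, h2⟩, ← hu_def, ← hr_def, abs_of_pos hxt]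
  have htx : t - x ≠ 0 := by intro h; apply hxt'; linarith [sub_eq_zero.1 h]
  rw [eq_comm, ← sub_eq_zero]
  have expand : (-t / u - x * (1 / u) - r * (1 / (r * u / (2 * (x - t))) * ((4 - x ^ 2) / (2 * (x - t) ^ 2))))
        - u / (t - x)
      = (-(t + x) * (x - t) * (t - x) - (4 - x ^ 2) * (t - x) - u ^ 2 * (x - t))
        / (u * (x - t) * (t - x)) := by
    field_simp
    ring
  rw [expand, div_eq_zero_iff]
  left
  linear_combination (t - x) * hu2

lemma hasDerivAt_Hneg {x t : ℝ} (hx : x < -2) (ht : t ∈ Ioo (-2:ℝ) 2) :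
    HasDerivAt (Hneg x) (Real.sqrt (4 - t ^ 2) / (t - x)) t := by
  obtain ⟨h1, h2⟩ := ht
  have hx4 : 4 < x ^ 2 := by nlinarith
  have ht4 : t ^ 2 < 4 := by nlinarith
  have hu : (0:ℝ) < 4 - t ^ 2 := by linarith
  have hxt : x - t < 0 := by linarith
  have hxt' : x - t ≠ 0 := hxt.ne
  set u := Real.sqrt (4 - t ^ 2) with hu_def
  set r := Real.sqrt (x ^ 2 - 4) with hr_def
  have hu0 : 0 < u := Real.sqrt_pos.2 hu
  have hr0 : 0 < r := Real.sqrt_pos.2 (by linarith)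
  have hu2 : u ^ 2 = 4 - t ^ 2 := Real.sq_sqrt hu.le
  have hr2 : r ^ 2 = x ^ 2 - 4 := Real.sq_sqrt (by linarith)
  have d1 : HasDerivAt (fun t => Real.sqrt (4 - t ^ 2)) (-t / u) t := hasDerivAt_sqrt4 ht4
  have d2 : HasDerivAt (fun t => Real.arcsin (t / 2)) (1 / u) t := hasDerivAt_arcsin_half ⟨h1, h2⟩
  have hw2 := wsq_lt_one hx4 ⟨h1, h2⟩
  have hwne1 : (4 - x * t) / (2 * (x - t)) ≠ -1 := by
    intro h; rw [h] at hw2; norm_num at hw2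
  have hwne2 : (4 - x * t) / (2 * (x - t)) ≠ 1 := by
    intro h; rw [h] at hw2; norm_num at hw2
  have d3 : HasDerivAt (fun t => Real.arcsin ((4 - x * t) / (2 * (x - t))))
      ((1 / Real.sqrt (1 - ((4 - x * t) / (2 * (x - t))) ^ 2)) * ((4 - x ^ 2) / (2 * (x - t) ^ 2))) t :=
    by have := (Real.hasDerivAt_arcsin hwne1 hwne2).comp t (hasDerivAt_w hxt'); exact this
  have := (d1.sub (d2.const_mul x)).add (d3.const_mul r)
  refine this.congr_deriv (Eq.symm ?_)
  rw [sqrt_one_sub_wsq hx4 ⟨h1, h2⟩, ← hu_def, ← hr_def, abs_of_neg hxt]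
  have htx : t - x ≠ 0 := by intro h; apply hxt'; linarith [sub_eq_zero.1 h]
  rw [eq_comm, ← sub_eq_zero]
  have expand : (-t / u - x * (1 / u) + r * (1 / (r * u / (2 * -(x - t))) * ((4 - x ^ 2) / (2 * (x - t) ^ 2))))
        - u / (t - x)
      = (-(t + x) * (t - x) + (4 - x ^ 2) - u ^ 2) / (u * (t - x)) := by
    field_simp
    ring
  rw [expand, div_eq_zero_iff]
  left
  linear_combination (-1 : ℝ) * hu2

noncomputable def A2 (t : ℝ) : ℝ := Real.sqrt (4 - t ^ 2) - 2 * Real.arcsin (t / 2)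
noncomputable def B2 (t : ℝ) : ℝ := Real.sqrt (4 - t ^ 2) + 2 * Real.arcsin (t / 2)

lemma hasDerivAt_A2 {t : ℝ} (ht : t ∈ Ioo (-2:ℝ) 2) :
    HasDerivAt A2 (Real.sqrt (4 - t ^ 2) / (t - 2)) t := by
  obtain ⟨h1, h2⟩ := ht
  have ht4 : t ^ 2 < 4 := by nlinarith
  have hu : (0:ℝ) < 4 - t ^ 2 := by linarith
  have hu0 : 0 < Real.sqrt (4 - t ^ 2) := Real.sqrt_pos.2 hu
  have hu2 : Real.sqrt (4 - t ^ 2) ^ 2 = 4 - t ^ 2 := Real.sq_sqrt hu.le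
  have := (hasDerivAt_sqrt4 ht4).sub ((hasDerivAt_arcsin_half ⟨h1, h2⟩).const_mul 2)
  refine this.congr_deriv (Eq.symm ?_)
  have h2t : t - 2 ≠ 0 := by intro h; nlinarith [sub_eq_zero.1 h]
  rw [eq_comm, ← sub_eq_zero]
  have expand : (-t / Real.sqrt (4 - t ^ 2) - 2 * (1 / Real.sqrt (4 - t ^ 2)))
        - Real.sqrt (4 - t ^ 2) / (t - 2)
      = ((-t - 2) * (t - 2) - Real.sqrt (4 - t ^ 2) ^ 2) / (Real.sqrt (4 - t ^ 2) * (t - 2)) := by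
    field_simp
  rw [expand, div_eq_zero_iff]
  left
  linear_combination (-1 : ℝ) * hu2

lemma hasDerivAt_B2 {t : ℝ} (ht : t ∈ Ioo (-2:ℝ) 2) :
    HasDerivAt B2 (Real.sqrt (4 - t ^ 2) / (t - (-2))) t := by
  obtain ⟨h1, h2⟩ := ht
  have ht4 : t ^ 2 < 4 := by nlinarith
  have hu : (0:ℝ) < 4 - t ^ 2 := by linarith
  have hu0 : 0 < Real.sqrt (4 - t ^ 2) := Real.sqrt_pos.2 hu
  have hu2 : Real.sqrt (4 - t ^ 2) ^ 2 = 4 - t ^ 2 := Real.sq_sqrt hu.le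
  have := (hasDerivAt_sqrt4 ht4).add ((hasDerivAt_arcsin_half ⟨h1, h2⟩).const_mul 2)
  refine this.congr_deriv (Eq.symm ?_)
  have h2t : t + 2 ≠ 0 := by intro h; nlinarith
  rw [eq_comm, ← sub_eq_zero]
  have expand : (-t / Real.sqrt (4 - t ^ 2) + 2 * (1 / Real.sqrt (4 - t ^ 2)))
        - Real.sqrt (4 - t ^ 2) / (t - (-2))
      = ((-t + 2) * (t + 2) - Real.sqrt (4 - t ^ 2) ^ 2) / (Real.sqrt (4 - t ^ 2) * (t + 2)) := by
    field_simp
    ring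
  rw [expand, div_eq_zero_iff]
  left
  linear_combination (-1 : ℝ) * hu2

lemma continuous_sqrt4 : Continuous (fun t : ℝ => Real.sqrt (4 - t ^ 2)) := by fun_prop

lemma ftc_g (x a b : ℝ) (F : ℝ → ℝ) (hab : a ≤ b)
    (hF : ContinuousOn F (Icc a b))
    (hd : ∀ t ∈ Ioo a b, HasDerivAt F (Real.sqrt (4 - t ^ 2) / (t - x)) t)
    (hx : ∀ t ∈ Icc a b, t - x ≠ 0) :
    ∫ t in a..b, Real.sqrt (4 - t ^ 2) / (t - x) = F b - F a := by
  apply intervalIntegral.integral_eq_sub_of_hasDeriv_right_of_le hab hF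
    (fun t ht => (hd t ht).hasDerivWithinAt)
  apply ContinuousOn.intervalIntegrable
  rw [uIcc_of_le hab]
  exact ContinuousOn.div continuous_sqrt4.continuousOn
    (by fun_prop) hx

lemma setIntegral_semicircK (x a b : ℝ) (hab : a ≤ b) (hsub : Icc a b ⊆ Icc (-2:ℝ) 2)
    (hx : ∀ t ∈ Icc a b, t - x ≠ 0) {S : Set ℝ} (hS1 : Ioo a b ⊆ S) (hS2 : S ⊆ Icc a b) :
    ∫ t in S, semicircK t / (t - x)
      = (1 / (2 * Real.pi)) * ∫ t in a..b, Real.sqrt (4 - t ^ 2) / (t - x) := by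
  have hae : S =ᵐ[volume] (Ioo a b : Set ℝ) := by
    rw [Filter.eventuallyEq_set]
    have hnull : volume (Icc a b \ Ioo a b) = 0 := by
      rw [Icc_diff_Ioo_same hab]
      exact (Set.Finite.measure_zero (by simp) _)
    have h1 : ∀ᵐ t ∂(volume : Measure ℝ), t ∉ Icc a b \ Ioo a b := by
      rw [ae_iff]
      refine measure_mono_null ?_ hnull
      intro t ht
      simp only [mem_setOf_eq, not_not] at ht
      exact ht
    filter_upwards [h1] with t ht
    constructor
    · intro hts
      by_contra h
      exact ht ⟨hS2 hts, h⟩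
    · exact fun h => hS1 h
  rw [setIntegral_congr_set hae, ← MeasureTheory.integral_Ioc_eq_integral_Ioo,
    ← intervalIntegral.integral_of_le hab, ← intervalIntegral.integral_const_mul]
  apply intervalIntegral.integral_congr
  intro t ht
  rw [uIcc_of_le hab] at ht
  simp only []
  rw [semicircK_eq (hsub ht)]
  ring

lemma continuousAt_Phi {x t : ℝ} (hx : x ^ 2 < 4) (ht : t ∈ Icc (-2:ℝ) 2) :
    ContinuousAt (Phi x) t := by
  have hN := Npos hx ht
  unfold Phi
  refine (continuous_sqrt4.continuousAt.sub
    (continuousAt_const.mul ((Real.continuous_arcsin.comp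
      (continuous_id.div_const 2)).continuousAt))).sub
    (continuousAt_const.mul (ContinuousAt.log ?_ hN.ne'))
  fun_prop

lemma continuousAt_Gfun {x t : ℝ} (hx : x ^ 2 < 4) (ht : t ∈ Icc (-2:ℝ) 2) (hne : t ≠ x) :
    ContinuousAt (Gfun x) t := by
  unfold Gfun
  refine (continuousAt_Phi hx ht).add
    (continuousAt_const.mul (ContinuousAt.log ?_ (sub_ne_zero.2 hne)))
  fun_prop

lemma continuousAt_Houter {x t : ℝ} (hne : x - t ≠ 0) :
    ContinuousAt (fun t => Real.arcsin ((4 - x * t) / (2 * (x - t)))) t := by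
  refine Real.continuous_arcsin.continuousAt.comp (ContinuousAt.div (by fun_prop) (by fun_prop) ?_)
  simpa using hne

lemma continuous_A2 : Continuous A2 := by
  unfold A2
  exact continuous_sqrt4.sub
    (continuous_const.mul (Real.continuous_arcsin.comp (continuous_id.div_const 2)))

lemma continuous_B2 : Continuous B2 := by
  unfold B2
  exact continuous_sqrt4.add
    (continuous_const.mul (Real.continuous_arcsin.comp (continuous_id.div_const 2)))

lemma sqrt_at_two : Real.sqrt (4 - (2:ℝ) ^ 2) = 0 := by norm_num
lemma sqrt_at_negtwo : Real.sqrt (4 - (-2:ℝ) ^ 2) = 0 := by norm_num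

lemma arcsin_two_half : Real.arcsin ((2:ℝ) / 2) = Real.pi / 2 := by
  rw [show (2:ℝ)/2 = 1 by norm_num, Real.arcsin_one]

lemma arcsin_negtwo_half : Real.arcsin ((-2:ℝ) / 2) = -(Real.pi / 2) := by
  rw [show (-2:ℝ)/2 = -1 by norm_num, Real.arcsin_neg_one]

lemma Gfun_boundary {x : ℝ} (hx : x ^ 2 < 4) :
    Gfun x 2 - Gfun x (-2) = -Real.pi * x := by
  have hx1 : x < 2 := by nlinarith
  have hx2 : -2 < x := by nlinarith
  unfold Gfun Phi
  rw [sqrt_at_two, sqrt_at_negtwo, arcsin_two_half, arcsin_negtwo_half]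
  rw [show (4:ℝ) - x * 2 + Real.sqrt (4 - x ^ 2) * 0 = 2 * (2 - x) by ring,
      show (4:ℝ) - x * (-2) + Real.sqrt (4 - x ^ 2) * 0 = 2 * (2 + x) by ring,
      Real.log_mul two_ne_zero (by linarith : (2:ℝ) - x ≠ 0),
      Real.log_mul two_ne_zero (by linarith : (2:ℝ) + x ≠ 0),
      show (-2:ℝ) - x = -(2 + x) by ring, Real.log_neg_eq_log]
  ring

lemma Hpos_boundary {x : ℝ} (hx : 2 < x) :
    Hpos x 2 - Hpos x (-2) = Real.pi * (-x + Real.sqrt (x ^ 2 - 4)) := by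
  unfold Hpos
  have h1 : (4 - x * 2) / (2 * (x - 2)) = -1 := by
    rw [div_eq_iff (by intro h; nlinarith [mul_eq_zero.1 h] : 2 * (x - 2) ≠ 0)]
    ring
  have h2 : (4 - x * (-2)) / (2 * (x - (-2))) = 1 := by
    rw [div_eq_iff (by intro h; nlinarith [mul_eq_zero.1 h] : 2 * (x - (-2)) ≠ 0)]
    ring
  rw [sqrt_at_two, sqrt_at_negtwo, arcsin_two_half, arcsin_negtwo_half, h1, h2,
    Real.arcsin_neg_one, Real.arcsin_one]
  ring

lemma Hneg_boundary {x : ℝ} (hx : x < -2) :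
    Hneg x 2 - Hneg x (-2) = Real.pi * (-x - Real.sqrt (x ^ 2 - 4)) := by
  unfold Hneg
  have h1 : (4 - x * 2) / (2 * (x - 2)) = -1 := by
    rw [div_eq_iff (by intro h; nlinarith [mul_eq_zero.1 h] : 2 * (x - 2) ≠ 0)]
    ring
  have h2 : (4 - x * (-2)) / (2 * (x - (-2))) = 1 := by
    rw [div_eq_iff (by intro h; nlinarith [mul_eq_zero.1 h] : 2 * (x - (-2)) ≠ 0)]
    ring
  rw [sqrt_at_two, sqrt_at_negtwo, arcsin_two_half, arcsin_negtwo_half, h1, h2,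
    Real.arcsin_neg_one, Real.arcsin_one]
  ring

lemma A2_boundary : A2 2 - A2 (-2) = -(2 * Real.pi) := by
  unfold A2
  rw [sqrt_at_two, sqrt_at_negtwo, arcsin_two_half, arcsin_negtwo_half]
  ring

lemma B2_boundary : B2 2 - B2 (-2) = 2 * Real.pi := by
  unfold B2
  rw [sqrt_at_two, sqrt_at_negtwo, arcsin_two_half, arcsin_negtwo_half]
  ring

lemma measurableSet_S (x ε : ℝ) : MeasurableSet {t : ℝ | ε < |t - x|} :=
  (isOpen_lt continuous_const (by fun_prop)).measurableSet

lemma setIntegral_restrict_Icc (x ε : ℝ) :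
    ∫ t in {t : ℝ | ε < |t - x|}, semicircK t / (t - x)
      = ∫ t in {t : ℝ | ε < |t - x|} ∩ Icc (-2:ℝ) 2, semicircK t / (t - x) := by
  apply setIntegral_eq_of_subset_of_forall_diff_eq_zero (measurableSet_S x ε)
    inter_subset_left
  intro t ht
  have : t ∉ Icc (-2:ℝ) 2 := fun h => ht.2 ⟨ht.1, h⟩
  rw [semicircK_eq_zero this, zero_div]

lemma integrableOn_f {x a b : ℝ} (hx : ∀ t ∈ Icc a b, t - x ≠ 0) :
    IntegrableOn (fun t => semicircK t / (t - x)) (Icc a b) volume := by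
  apply ContinuousOn.integrableOn_Icc
  exact continuous_semicircK.continuousOn.div (by fun_prop) hx

lemma tendsto_sub_nhdsWithin (x : ℝ) :
    Tendsto (fun ε : ℝ => x - ε) (nhdsWithin 0 (Set.Ioi 0)) (nhds x) := by
  have : Tendsto (fun ε : ℝ => x - ε) (nhds 0) (nhds (x - 0)) :=
    tendsto_const_nhds.sub tendsto_id
  simpa using this.mono_left nhdsWithin_le_nhds

lemma tendsto_add_nhdsWithin (x : ℝ) :
    Tendsto (fun ε : ℝ => x + ε) (nhdsWithin 0 (Set.Ioi 0)) (nhds x) := by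
  have : Tendsto (fun ε : ℝ => x + ε) (nhds 0) (nhds (x + 0)) :=
    tendsto_const_nhds.add tendsto_id
  simpa using this.mono_left nhdsWithin_le_nhds

lemma main_inner {x : ℝ} (hx : x ^ 2 < 4) :
    Tendsto (fun ε : ℝ => (1 / Real.pi) * ∫ t in {t : ℝ | ε < |t - x|}, semicircK t / (t - x))
      (nhdsWithin 0 (Set.Ioi 0)) (nhds (semicircHK x)) := by
  have hx1 : x < 2 := by nlinarith
  have hx2 : -2 < x := by nlinarith
  set c : ℝ := 1 / (2 * Real.pi) with hc
  set E : ℝ → ℝ := fun ε => (1 / Real.pi) *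
    (c * ((Phi x (x - ε) - Phi x (x + ε)) + (Gfun x 2 - Gfun x (-2)))) with hE
  have hxmem : x ∈ Icc (-2:ℝ) 2 := ⟨hx2.le, hx1.le⟩
  have key : Tendsto E (nhdsWithin 0 (Set.Ioi 0)) (nhds (semicircHK x)) := by
    have h1 : Tendsto (fun ε : ℝ => Phi x (x - ε)) (nhdsWithin 0 (Set.Ioi 0)) (nhds (Phi x x)) :=
      ((continuousAt_Phi hx hxmem).tendsto).comp (tendsto_sub_nhdsWithin x)
    have h2 : Tendsto (fun ε : ℝ => Phi x (x + ε)) (nhdsWithin 0 (Set.Ioi 0)) (nhds (Phi x x)) :=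
      ((continuousAt_Phi hx hxmem).tendsto).comp (tendsto_add_nhdsWithin x)
    have h3 := (((h1.sub h2).add
      (tendsto_const_nhds (x := Gfun x 2 - Gfun x (-2)))).const_mul c).const_mul (1 / Real.pi)
    convert h3 using 2
    rw [Gfun_boundary hx]
    unfold semicircHK
    rw [max_eq_right (by nlinarith : x ^ 2 - 4 ≤ 0), Real.sqrt_zero, mul_zero, add_zero]
    have hπ := Real.pi_ne_zero
    rw [hc]
    field_simp [pow_two]
    ring
  apply key.congr'
  have hmem : Ioo (0:ℝ) (min (2 - x) (x + 2)) ∈ nhdsWithin 0 (Set.Ioi 0) :=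
    Ioo_mem_nhdsGT_of_mem ⟨le_refl 0, lt_min (by linarith) (by linarith)⟩
  filter_upwards [hmem] with ε hε
  obtain ⟨hε0, hεδ⟩ := hε
  have hδ1 : ε < 2 - x := lt_of_lt_of_le hεδ (min_le_left _ _)
  have hδ2 : ε < x + 2 := lt_of_lt_of_le hεδ (min_le_right _ _)
  -- set identification
  have hS : {t : ℝ | ε < |t - x|} ∩ Icc (-2:ℝ) 2
      = Ico (-2:ℝ) (x - ε) ∪ Ioc (x + ε) 2 := by
    ext t
    simp only [mem_inter_iff, mem_setOf_eq, mem_Icc, mem_union, mem_Ico, mem_Ioc, lt_abs]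
    constructor
    · rintro ⟨h | h, h1, h2⟩
      · exact Or.inr ⟨by linarith, h2⟩
      · exact Or.inl ⟨h1, by linarith⟩
    · rintro (⟨h1, h2⟩ | ⟨h1, h2⟩)
      · exact ⟨Or.inr (by linarith), h1, by linarith⟩
      · exact ⟨Or.inl (by linarith), by linarith, h2⟩
  have hne_left : ∀ t ∈ Icc (-2:ℝ) (x - ε), t - x ≠ 0 := by
    intro t ht h
    have := sub_eq_zero.1 h
    obtain ⟨h1, h2⟩ := ht
    linarith
  have hne_right : ∀ t ∈ Icc (x + ε) (2:ℝ), t - x ≠ 0 := by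
    intro t ht h
    have := sub_eq_zero.1 h
    obtain ⟨h1, h2⟩ := ht
    linarith
  have hab1 : (-2:ℝ) ≤ x - ε := by linarith
  have hab2 : x + ε ≤ (2:ℝ) := by linarith
  have hsub1 : Icc (-2:ℝ) (x - ε) ⊆ Icc (-2:ℝ) 2 := Icc_subset_Icc le_rfl (by linarith)
  have hsub2 : Icc (x + ε) (2:ℝ) ⊆ Icc (-2:ℝ) 2 := Icc_subset_Icc (by linarith) le_rfl
  have hdisj : Disjoint (Ico (-2:ℝ) (x - ε)) (Ioc (x + ε) 2) := by
    rw [disjoint_left]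
    intro t ht1 ht2
    obtain ⟨_, h1⟩ := ht1
    obtain ⟨h2, _⟩ := ht2
    linarith
  have hint1 : IntegrableOn (fun t => semicircK t / (t - x)) (Ico (-2:ℝ) (x - ε)) volume :=
    (integrableOn_f hne_left).mono_set Ico_subset_Icc_self
  have hint2 : IntegrableOn (fun t => semicircK t / (t - x)) (Ioc (x + ε) (2:ℝ)) volume :=
    (integrableOn_f hne_right).mono_set Ioc_subset_Icc_self
  have hFTC1 : ∫ t in (-2:ℝ)..(x - ε), Real.sqrt (4 - t ^ 2) / (t - x)
      = Gfun x (x - ε) - Gfun x (-2) := by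
    apply ftc_g x _ _ _ hab1
    · intro t ht
      exact (continuousAt_Gfun hx (hsub1 ht)
        (by obtain ⟨h1, h2⟩ := ht; intro h; rw [h] at h2; linarith)).continuousWithinAt
    · intro t ht
      obtain ⟨h1, h2⟩ := ht
      exact hasDerivAt_Gfun hx ⟨h1, by linarith⟩ (by intro h; rw [h] at h2; linarith)
    · exact hne_left
  have hFTC2 : ∫ t in (x + ε)..(2:ℝ), Real.sqrt (4 - t ^ 2) / (t - x)
      = Gfun x 2 - Gfun x (x + ε) := by
    apply ftc_g x _ _ _ hab2
    · intro t ht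
      exact (continuousAt_Gfun hx (hsub2 ht)
        (by obtain ⟨h1, h2⟩ := ht; intro h; rw [h] at h1; linarith)).continuousWithinAt
    · intro t ht
      obtain ⟨h1, h2⟩ := ht
      exact hasDerivAt_Gfun hx ⟨by linarith, h2⟩ (by intro h; rw [h] at h1; linarith)
    · exact hne_right
  have hlog1 : Real.log (x - ε - x) = Real.log ε := by
    rw [show x - ε - x = -ε by ring, Real.log_neg_eq_log]
  have hlog2 : Real.log (x + ε - x) = Real.log ε := by
    rw [show x + ε - x = ε by ring]
  calc E ε = (1 / Real.pi) *
      (c * ((Gfun x (x - ε) - Gfun x (-2)) + (Gfun x 2 - Gfun x (x + ε)))) := by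
        show (1 / Real.pi) * (c * ((Phi x (x - ε) - Phi x (x + ε)) + (Gfun x 2 - Gfun x (-2)))) = _
        unfold Gfun
        rw [hlog1, hlog2]
        ring
    _ = (1 / Real.pi) * ∫ t in {t : ℝ | ε < |t - x|}, semicircK t / (t - x) := by
        rw [setIntegral_restrict_Icc x ε, hS, setIntegral_union hdisj measurableSet_Ioc hint1 hint2,
          setIntegral_semicircK x (-2) (x - ε) hab1 hsub1 hne_left Ioo_subset_Ico_self
            Ico_subset_Icc_self,
          setIntegral_semicircK x (x + ε) 2 hab2 hsub2 hne_right Ioo_subset_Ioc_self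
            Ioc_subset_Icc_self,
          hFTC1, hFTC2]
        ring

lemma continuousAt_Hpos {x t : ℝ} (hne : x - t ≠ 0) : ContinuousAt (Hpos x) t := by
  unfold Hpos
  exact (continuous_sqrt4.continuousAt.sub (continuousAt_const.mul
    ((Real.continuous_arcsin.comp (continuous_id.div_const 2)).continuousAt))).sub
    (continuousAt_const.mul (continuousAt_Houter hne))

lemma continuousAt_Hneg {x t : ℝ} (hne : x - t ≠ 0) : ContinuousAt (Hneg x) t := by
  unfold Hneg
  exact (continuous_sqrt4.continuousAt.sub (continuousAt_const.mul
    ((Real.continuous_arcsin.comp (continuous_id.div_const 2)).continuousAt))).add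
    (continuousAt_const.mul (continuousAt_Houter hne))

lemma main_outer_pos {x : ℝ} (hx : 2 < x) :
    Tendsto (fun ε : ℝ => (1 / Real.pi) * ∫ t in {t : ℝ | ε < |t - x|}, semicircK t / (t - x))
      (nhdsWithin 0 (Set.Ioi 0)) (nhds (semicircHK x)) := by
  have hπ := Real.pi_ne_zero
  have hne : ∀ t ∈ Icc (-2:ℝ) 2, t - x ≠ 0 := by
    intro t ht h
    have := sub_eq_zero.1 h
    obtain ⟨h1, h2⟩ := ht
    linarith
  have hval : ∫ t in (-2:ℝ)..2, Real.sqrt (4 - t ^ 2) / (t - x)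
      = Real.pi * (-x + Real.sqrt (x ^ 2 - 4)) := by
    rw [ftc_g x (-2) 2 (Hpos x) (by norm_num)
      (fun t ht => (continuousAt_Hpos (by obtain ⟨h1, h2⟩ := ht; intro h; nlinarith [sub_eq_zero.1 h])).continuousWithinAt)
      (fun t ht => hasDerivAt_Hpos hx ht) hne]
    exact Hpos_boundary hx
  have htarget : (1 / Real.pi) * ((1 / (2 * Real.pi)) * (Real.pi * (-x + Real.sqrt (x ^ 2 - 4))))
      = semicircHK x := by
    have hsign : Real.sign x = 1 := Real.sign_of_pos (by linarith)
    have hmax : max (x ^ 2 - 4) 0 = x ^ 2 - 4 := max_eq_left (by nlinarith)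
    unfold semicircHK
    rw [hsign, hmax, one_mul]
    field_simp
  rw [← htarget]
  apply Tendsto.congr' _ tendsto_const_nhds
  · have hmem : Ioo (0:ℝ) (x - 2) ∈ nhdsWithin 0 (Set.Ioi 0) :=
      Ioo_mem_nhdsGT_of_mem ⟨le_refl 0, by linarith⟩
    filter_upwards [hmem] with ε hε
    obtain ⟨hε0, hεδ⟩ := hε
    have hS : {t : ℝ | ε < |t - x|} ∩ Icc (-2:ℝ) 2 = Icc (-2:ℝ) 2 := by
      apply inter_eq_right.2
      intro t ht
      obtain ⟨h1, h2⟩ := ht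
      simp only [mem_setOf_eq, lt_abs]
      right
      linarith
    rw [setIntegral_restrict_Icc x ε, hS,
      setIntegral_semicircK x (-2) 2 (by norm_num) (subset_refl _) hne Ioo_subset_Icc_self
        (subset_refl _), hval]

lemma main_outer_neg {x : ℝ} (hx : x < -2) :
    Tendsto (fun ε : ℝ => (1 / Real.pi) * ∫ t in {t : ℝ | ε < |t - x|}, semicircK t / (t - x))
      (nhdsWithin 0 (Set.Ioi 0)) (nhds (semicircHK x)) := by
  have hπ := Real.pi_ne_zero
  have hne : ∀ t ∈ Icc (-2:ℝ) 2, t - x ≠ 0 := by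
    intro t ht h
    have := sub_eq_zero.1 h
    obtain ⟨h1, h2⟩ := ht
    linarith
  have hval : ∫ t in (-2:ℝ)..2, Real.sqrt (4 - t ^ 2) / (t - x)
      = Real.pi * (-x - Real.sqrt (x ^ 2 - 4)) := by
    rw [ftc_g x (-2) 2 (Hneg x) (by norm_num)
      (fun t ht => (continuousAt_Hneg (by obtain ⟨h1, h2⟩ := ht; intro h; nlinarith [sub_eq_zero.1 h])).continuousWithinAt)
      (fun t ht => hasDerivAt_Hneg hx ht) hne]
    exact Hneg_boundary hx
  have htarget : (1 / Real.pi) * ((1 / (2 * Real.pi)) * (Real.pi * (-x - Real.sqrt (x ^ 2 - 4))))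
      = semicircHK x := by
    have hsign : Real.sign x = -1 := Real.sign_of_neg (by linarith)
    have hmax : max (x ^ 2 - 4) 0 = x ^ 2 - 4 := max_eq_left (by nlinarith)
    unfold semicircHK
    rw [hsign, hmax]
    field_simp
    ring
  rw [← htarget]
  apply Tendsto.congr' _ tendsto_const_nhds
  · have hmem : Ioo (0:ℝ) (-2 - x) ∈ nhdsWithin 0 (Set.Ioi 0) :=
      Ioo_mem_nhdsGT_of_mem ⟨le_refl 0, by linarith⟩
    filter_upwards [hmem] with ε hε
    obtain ⟨hε0, hεδ⟩ := hε
    have hS : {t : ℝ | ε < |t - x|} ∩ Icc (-2:ℝ) 2 = Icc (-2:ℝ) 2 := by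
      apply inter_eq_right.2
      intro t ht
      obtain ⟨h1, h2⟩ := ht
      simp only [mem_setOf_eq, lt_abs]
      left
      linarith
    rw [setIntegral_restrict_Icc x ε, hS,
      setIntegral_semicircK x (-2) 2 (by norm_num) (subset_refl _) hne Ioo_subset_Icc_self
        (subset_refl _), hval]

lemma main_two :
    Tendsto (fun ε : ℝ => (1 / Real.pi) * ∫ t in {t : ℝ | ε < |t - (2:ℝ)|}, semicircK t / (t - 2))
      (nhdsWithin 0 (Set.Ioi 0)) (nhds (semicircHK 2)) := by
  have hπ := Real.pi_ne_zero
  have key : Tendsto (fun ε : ℝ => (1 / Real.pi) * ((1 / (2 * Real.pi)) * (A2 (2 - ε) - A2 (-2))))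
      (nhdsWithin 0 (Set.Ioi 0))
      (nhds ((1 / Real.pi) * ((1 / (2 * Real.pi)) * (A2 2 - A2 (-2))))) := by
    have h1 : Tendsto (fun ε : ℝ => A2 (2 - ε)) (nhdsWithin 0 (Set.Ioi 0)) (nhds (A2 2)) :=
      (continuous_A2.continuousAt.tendsto).comp (tendsto_sub_nhdsWithin 2)
    exact ((h1.sub tendsto_const_nhds).const_mul _).const_mul _
  have hval : (1 / Real.pi) * ((1 / (2 * Real.pi)) * (A2 2 - A2 (-2))) = semicircHK 2 := by
    rw [A2_boundary]
    unfold semicircHK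
    rw [show ((2:ℝ) ^ 2 - 4) = 0 by norm_num, max_self, Real.sqrt_zero, mul_zero, add_zero]
    field_simp
  rw [← hval]
  apply key.congr'
  have hmem : Ioo (0:ℝ) 1 ∈ nhdsWithin 0 (Set.Ioi 0) :=
    Ioo_mem_nhdsGT_of_mem ⟨le_refl 0, by norm_num⟩
  filter_upwards [hmem] with ε hε
  obtain ⟨hε0, hεδ⟩ := hε
  have hne : ∀ t ∈ Icc (-2:ℝ) (2 - ε), t - 2 ≠ 0 := by
    intro t ht h
    have := sub_eq_zero.1 h
    obtain ⟨h1, h2⟩ := ht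
    linarith
  have hab : (-2:ℝ) ≤ 2 - ε := by linarith
  have hsub : Icc (-2:ℝ) (2 - ε) ⊆ Icc (-2:ℝ) 2 := Icc_subset_Icc le_rfl (by linarith)
  have hS : {t : ℝ | ε < |t - (2:ℝ)|} ∩ Icc (-2:ℝ) 2 = Ico (-2:ℝ) (2 - ε) := by
    ext t
    simp only [mem_inter_iff, mem_setOf_eq, mem_Icc, mem_Ico, lt_abs]
    constructor
    · rintro ⟨h | h, h1, h2⟩
      · linarith
      · exact ⟨h1, by linarith⟩
    · rintro ⟨h1, h2⟩
      exact ⟨Or.inr (by linarith), h1, by linarith⟩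
  have hFTC : ∫ t in (-2:ℝ)..(2 - ε), Real.sqrt (4 - t ^ 2) / (t - 2)
      = A2 (2 - ε) - A2 (-2) := by
    apply ftc_g 2 _ _ _ hab continuous_A2.continuousOn
    · intro t ht
      obtain ⟨h1, h2⟩ := ht
      exact hasDerivAt_A2 ⟨h1, by linarith⟩
    · exact hne
  rw [setIntegral_restrict_Icc 2 ε, hS,
    setIntegral_semicircK 2 (-2) (2 - ε) hab hsub hne Ioo_subset_Ico_self Ico_subset_Icc_self,
    hFTC]

lemma main_negtwo :
    Tendsto (fun ε : ℝ => (1 / Real.pi) * ∫ t in {t : ℝ | ε < |t - (-2:ℝ)|}, semicircK t / (t - (-2)))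
      (nhdsWithin 0 (Set.Ioi 0)) (nhds (semicircHK (-2))) := by
  have hπ := Real.pi_ne_zero
  have key : Tendsto (fun ε : ℝ => (1 / Real.pi) * ((1 / (2 * Real.pi)) * (B2 2 - B2 (-2 + ε))))
      (nhdsWithin 0 (Set.Ioi 0))
      (nhds ((1 / Real.pi) * ((1 / (2 * Real.pi)) * (B2 2 - B2 (-2))))) := by
    have h1 : Tendsto (fun ε : ℝ => B2 (-2 + ε)) (nhdsWithin 0 (Set.Ioi 0)) (nhds (B2 (-2))) :=
      (continuous_B2.continuousAt.tendsto).comp (tendsto_add_nhdsWithin (-2))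
    exact ((tendsto_const_nhds.sub h1).const_mul _).const_mul _
  have hval : (1 / Real.pi) * ((1 / (2 * Real.pi)) * (B2 2 - B2 (-2))) = semicircHK (-2) := by
    rw [B2_boundary]
    unfold semicircHK
    rw [show ((-2:ℝ) ^ 2 - 4) = 0 by norm_num, max_self, Real.sqrt_zero, mul_zero, add_zero]
    have hsign : Real.sign (-2:ℝ) = -1 := Real.sign_of_neg (by norm_num)
    field_simp
  rw [← hval]
  apply key.congr'
  have hmem : Ioo (0:ℝ) 1 ∈ nhdsWithin 0 (Set.Ioi 0) :=
    Ioo_mem_nhdsGT_of_mem ⟨le_refl 0, by norm_num⟩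
  filter_upwards [hmem] with ε hε
  obtain ⟨hε0, hεδ⟩ := hε
  have hne : ∀ t ∈ Icc (-2 + ε) (2:ℝ), t - (-2) ≠ 0 := by
    intro t ht h
    have := sub_eq_zero.1 h
    obtain ⟨h1, h2⟩ := ht
    linarith
  have hab : (-2 + ε:ℝ) ≤ 2 := by linarith
  have hsub : Icc (-2 + ε) (2:ℝ) ⊆ Icc (-2:ℝ) 2 := Icc_subset_Icc (by linarith) le_rfl
  have hS : {t : ℝ | ε < |t - (-2:ℝ)|} ∩ Icc (-2:ℝ) 2 = Ioc (-2 + ε) (2:ℝ) := by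
    ext t
    simp only [mem_inter_iff, mem_setOf_eq, mem_Icc, mem_Ioc, lt_abs]
    constructor
    · rintro ⟨h | h, h1, h2⟩
      · exact ⟨by linarith, h2⟩
      · linarith
    · rintro ⟨h1, h2⟩
      exact ⟨Or.inl (by linarith), by linarith, h2⟩
  have hFTC : ∫ t in (-2 + ε:ℝ)..2, Real.sqrt (4 - t ^ 2) / (t - (-2))
      = B2 2 - B2 (-2 + ε) := by
    apply ftc_g (-2) _ _ _ hab continuous_B2.continuousOn
    · intro t ht
      obtain ⟨h1, h2⟩ := ht
      exact hasDerivAt_B2 ⟨by linarith, h2⟩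
    · exact hne
  rw [setIntegral_restrict_Icc (-2) ε, hS,
    setIntegral_semicircK (-2) (-2 + ε) 2 hab hsub hne Ioo_subset_Ioc_self Ioc_subset_Icc_self,
    hFTC]

/-- the Hilbert transform (principal value) of the semicircular kernel equals
`semicircHK` at every real point. -/
theorem hilbert_transform_semicircular_kernel :
    ∀ x : ℝ,
      Tendsto (fun ε : ℝ => (1 / Real.pi) * ∫ t in {t : ℝ | ε < |t - x|}, semicircK t / (t - x))
        (nhdsWithin 0 (Set.Ioi 0)) (nhds (semicircHK x)) := by
  intro x
  rcases lt_trichotomy x (-2) with h | h | h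
  · exact main_outer_neg h
  · subst h; exact main_negtwo
  · rcases lt_trichotomy x 2 with h2 | h2 | h2
    · exact main_inner (by nlinarith)
    · subst h2; exact main_two
    · exact main_outer_pos h2
end

section
/- For any Stieltjes transform t(z) = ∫ dρ(λ)/(λ−z) of a finite positive measure ρ on ℝ, and any fixed x ∈ ℝ, the function y ↦ y·|t(x + iy)| is nondecreasing on (0, ∞). -/
open MeasureTheory Set Complex

section StieltjesAux

variable {ρ : Measure ℝ} [IsFiniteMeasure ρ] (x : ℝ)

private lemma sAux_ne (y l : ℝ) (hy : 0 < y) :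
    ((l:ℂ) - ((x:ℂ) + y * Complex.I)) ≠ 0 := by
  intro h
  have := congrArg Complex.im h
  simp at this
  exact hy.ne' this

private lemma sAux_cont (y : ℝ) (hy : 0 < y) :
    Continuous fun l : ℝ => ((l:ℂ) - ((x:ℂ) + y * Complex.I))⁻¹ := by
  apply Continuous.inv₀
  · fun_prop
  · exact fun l => sAux_ne x y l hy

private lemma sAux_norm_le (y l : ℝ) (hy : 0 < y) :
    ‖((l:ℂ) - ((x:ℂ) + y * Complex.I))⁻¹‖ ≤ 1/y := by
  rw [norm_inv, one_div]
  apply inv_anti₀ hy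
  calc y = |(((l:ℂ) - ((x:ℂ) + y * Complex.I)).im)| := by simp [abs_of_pos hy]
    _ ≤ _ := by
      simpa using
        Complex.abs_im_le_norm ((l:ℂ) - ((x:ℂ) + y * Complex.I))

private lemma sAux_integrable (y : ℝ) (hy : 0 < y) :
    Integrable (fun l : ℝ => ((l:ℂ) - ((x:ℂ) + y * Complex.I))⁻¹) ρ := by
  refine ⟨(sAux_cont x y hy).aestronglyMeasurable, ?_⟩
  exact HasFiniteIntegral.of_bounded (C := 1/y)
    (Filter.Eventually.of_forall fun l => sAux_norm_le x y l hy)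

private lemma sAux_norm_sq (y l : ℝ) (hy : 0 < y) :
    ‖((l:ℂ) - ((x:ℂ) + y * Complex.I))⁻¹‖ ^ (2:ℝ) = (((l-x)^2 + y^2))⁻¹ := by
  have hns : Complex.normSq ((l:ℂ) - ((x:ℂ) + y * Complex.I)) = (l-x)^2 + y^2 := by
    rw [Complex.normSq_apply]; simp; ring
  rw [Real.rpow_two, norm_inv, inv_pow, Complex.sq_norm, hns]

private lemma sAux_J_int (y : ℝ) (hy : 0 < y) :
    Integrable (fun l : ℝ => (((l-x)^2 + y^2))⁻¹) ρ := by
  have hcont : Continuous fun l : ℝ => (((l-x)^2 + y^2))⁻¹ := by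
    apply Continuous.inv₀
    · fun_prop
    · intro l; positivity
  refine ⟨hcont.aestronglyMeasurable, ?_⟩
  refine HasFiniteIntegral.of_bounded (C := 1/y^2)
    (Filter.Eventually.of_forall fun l => ?_)
  rw [norm_inv, Real.norm_of_nonneg (by positivity), one_div]
  apply inv_anti₀ (by positivity)
  nlinarith [sq_nonneg (l - x)]

private lemma sAux_im (y : ℝ) (hy : 0 < y) :
    (∫ l : ℝ, ((l:ℂ) - ((x:ℂ) + y * Complex.I))⁻¹ ∂ρ).im
      = y * ∫ l : ℝ, (((l-x)^2 + y^2))⁻¹ ∂ρ := by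
  have h1 : ∀ l : ℝ, (((l:ℂ) - ((x:ℂ) + y * Complex.I))⁻¹).im
      = y * (((l-x)^2 + y^2))⁻¹ := by
    intro l
    have him : ((l:ℂ) - ((x:ℂ) + y * Complex.I)).im = -y := by simp
    have hns : Complex.normSq ((l:ℂ) - ((x:ℂ) + y * Complex.I)) = (l-x)^2 + y^2 := by
      rw [Complex.normSq_apply]; simp; ring
    rw [Complex.inv_im, him, hns, neg_neg, div_eq_mul_inv]
  have h2 := integral_im (𝕜 := ℂ) (μ := ρ) (sAux_integrable x y hy)
  simp only [RCLike.im_to_complex] at h2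
  rw [← h2]
  simp_rw [h1]
  rw [integral_const_mul]

private lemma sAux_memL2 (y : ℝ) (hy : 0 < y) :
    MemLp (fun l : ℝ => ‖((l:ℂ) - ((x:ℂ) + y * Complex.I))⁻¹‖) (ENNReal.ofReal 2) ρ := by
  refine MemLp.mono_exponent ?_ le_top
  exact memLp_top_of_bound ((sAux_cont x y hy).norm.aestronglyMeasurable) (1/y)
    (Filter.Eventually.of_forall fun l => by
      rw [Real.norm_of_nonneg (norm_nonneg _)]; exact sAux_norm_le x y l hy)

end StieltjesAux

/-- for the Stieltjes transform `t(z) = ∫ (λ − z)⁻¹ dρ(λ)` of a finite positive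
measure `ρ` on ℝ and any fixed `x ∈ ℝ`, the map `y ↦ y·|t(x + iy)|` is nondecreasing on `(0,∞)`. -/
theorem stieltjes_transform_y_abs_monotone
    (ρ : Measure ℝ) [IsFiniteMeasure ρ] (x : ℝ) :
    MonotoneOn (fun y : ℝ => y * ‖∫ l : ℝ, ((l : ℂ) - (x + y * Complex.I))⁻¹ ∂ρ‖)
      (Set.Ioi (0 : ℝ)) := by
  intro y1 hy1 y2 hy2 h12
  simp only [Set.mem_Ioi] at hy1 hy2
  set T1 := ∫ l : ℝ, ((l:ℂ) - ((x:ℂ) + y1 * Complex.I))⁻¹ ∂ρ with hT1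
  set T2 := ∫ l : ℝ, ((l:ℂ) - ((x:ℂ) + y2 * Complex.I))⁻¹ ∂ρ with hT2
  set J1 := ∫ l : ℝ, (((l-x)^2 + y1^2))⁻¹ ∂ρ with hJ1
  set J2 := ∫ l : ℝ, (((l-x)^2 + y2^2))⁻¹ ∂ρ with hJ2
  have hJ1nn : 0 ≤ J1 := integral_nonneg fun l => by positivity
  have hJ2nn : 0 ≤ J2 := integral_nonneg fun l => by positivity
  -- Step A : y1^2 * J1 ≤ y2^2 * J2
  have stepA : y1^2 * J1 ≤ y2^2 * J2 := by
    rw [hJ1, hJ2, ← integral_const_mul, ← integral_const_mul]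
    refine integral_mono ((sAux_J_int x y1 hy1).const_mul _)
      ((sAux_J_int x y2 hy2).const_mul _) fun l => ?_
    have h1 : (0:ℝ) < (l-x)^2 + y1^2 := by positivity
    have h2 : (0:ℝ) < (l-x)^2 + y2^2 := by positivity
    rw [← div_eq_mul_inv, ← div_eq_mul_inv, div_le_div_iff₀ h1 h2]
    nlinarith [mul_nonneg (by nlinarith : (0:ℝ) ≤ y2^2 - y1^2) (sq_nonneg (l-x))]
  -- Step B : ‖T1 - T2‖ ≤ (y2 - y1) * √J1 * √J2
  have stepB : ‖T1 - T2‖ ≤ (y2 - y1) * (Real.sqrt J1 * Real.sqrt J2) := by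
    rw [hT1, hT2, ← integral_sub (sAux_integrable x y1 hy1) (sAux_integrable x y2 hy2)]
    calc ‖∫ l : ℝ, (((l:ℂ) - ((x:ℂ) + y1 * Complex.I))⁻¹
            - ((l:ℂ) - ((x:ℂ) + y2 * Complex.I))⁻¹) ∂ρ‖
        ≤ ∫ l : ℝ, ‖((l:ℂ) - ((x:ℂ) + y1 * Complex.I))⁻¹
            - ((l:ℂ) - ((x:ℂ) + y2 * Complex.I))⁻¹‖ ∂ρ := norm_integral_le_integral_norm _
      _ = ∫ l : ℝ, (y2 - y1) * (‖((l:ℂ) - ((x:ℂ) + y1 * Complex.I))⁻¹‖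
            * ‖((l:ℂ) - ((x:ℂ) + y2 * Complex.I))⁻¹‖) ∂ρ := by
          refine integral_congr_ae (Filter.Eventually.of_forall fun l => ?_)
          dsimp only
          have hne1 := sAux_ne x y1 l hy1
          have hne2 := sAux_ne x y2 l hy2
          have key : ((l:ℂ) - ((x:ℂ) + y1 * Complex.I))⁻¹
              - ((l:ℂ) - ((x:ℂ) + y2 * Complex.I))⁻¹
              = (((y1:ℂ) - y2) * Complex.I) * (((l:ℂ) - ((x:ℂ) + y1 * Complex.I))⁻¹
                * ((l:ℂ) - ((x:ℂ) + y2 * Complex.I))⁻¹) := by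
            rw [inv_sub_inv hne1 hne2, div_eq_mul_inv, mul_inv]
            ring
          rw [key]
          simp only [norm_mul, Complex.norm_I, mul_one]
          congr 1
          have h3 : ((y1:ℂ) - y2) = ((y1 - y2 : ℝ) : ℂ) := by push_cast; ring
          rw [h3, Complex.norm_real, Real.norm_eq_abs, abs_sub_comm]
          exact abs_of_nonneg (by linarith)
      _ = (y2 - y1) * ∫ l : ℝ, ‖((l:ℂ) - ((x:ℂ) + y1 * Complex.I))⁻¹‖
            * ‖((l:ℂ) - ((x:ℂ) + y2 * Complex.I))⁻¹‖ ∂ρ := integral_const_mul _ _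
      _ ≤ (y2 - y1) * (Real.sqrt J1 * Real.sqrt J2) := by
          refine mul_le_mul_of_nonneg_left ?_ (by linarith)
          have hH := integral_mul_le_Lp_mul_Lq_of_nonneg (μ := ρ)
            (Real.HolderConjugate.two_two)
            (Filter.Eventually.of_forall fun l => norm_nonneg _)
            (Filter.Eventually.of_forall fun l => norm_nonneg _)
            (sAux_memL2 x y1 hy1) (sAux_memL2 x y2 hy2)
          calc (∫ l : ℝ, ‖((l:ℂ) - ((x:ℂ) + y1 * Complex.I))⁻¹‖
                * ‖((l:ℂ) - ((x:ℂ) + y2 * Complex.I))⁻¹‖ ∂ρ)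
              ≤ (∫ l : ℝ, ‖((l:ℂ) - ((x:ℂ) + y1 * Complex.I))⁻¹‖ ^ (2:ℝ) ∂ρ) ^ ((1:ℝ)/2)
                * (∫ l : ℝ, ‖((l:ℂ) - ((x:ℂ) + y2 * Complex.I))⁻¹‖ ^ (2:ℝ) ∂ρ) ^ ((1:ℝ)/2) := hH
            _ = Real.sqrt J1 * Real.sqrt J2 := by
                simp_rw [sAux_norm_sq x y1 _ hy1, sAux_norm_sq x y2 _ hy2]
                rw [← hJ1, ← hJ2, Real.sqrt_eq_rpow, Real.sqrt_eq_rpow]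
  -- imaginary parts
  have hIm2 : T2.im = y2 * J2 := sAux_im x y2 hy2
  -- combine
  have hsqrt : y1 * Real.sqrt J1 ≤ y2 * Real.sqrt J2 := by
    have h1 : y1 * Real.sqrt J1 = Real.sqrt (y1^2 * J1) := by
      rw [Real.sqrt_mul (by positivity), Real.sqrt_sq hy1.le]
    have h2 : y2 * Real.sqrt J2 = Real.sqrt (y2^2 * J2) := by
      rw [Real.sqrt_mul (by positivity), Real.sqrt_sq hy2.le]
    rw [h1, h2]
    exact Real.sqrt_le_sqrt stepA
  have hIm_le : y2 * J2 ≤ ‖T2‖ := by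
    rw [← hIm2]
    calc T2.im ≤ |T2.im| := le_abs_self _
      _ ≤ ‖T2‖ := by simpa using Complex.abs_im_le_norm T2
  have key2 : y1 * ((y2 - y1) * (Real.sqrt J1 * Real.sqrt J2)) ≤ (y2 - y1) * ‖T2‖ := by
    have e1 : y1 * ((y2 - y1) * (Real.sqrt J1 * Real.sqrt J2))
        = (y2 - y1) * ((y1 * Real.sqrt J1) * Real.sqrt J2) := by ring
    rw [e1]
    refine mul_le_mul_of_nonneg_left ?_ (by linarith)
    calc (y1 * Real.sqrt J1) * Real.sqrt J2 ≤ (y2 * Real.sqrt J2) * Real.sqrt J2 :=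
          mul_le_mul_of_nonneg_right hsqrt (Real.sqrt_nonneg _)
      _ = y2 * J2 := by rw [mul_assoc, Real.mul_self_sqrt hJ2nn]
      _ ≤ ‖T2‖ := hIm_le
  calc y1 * ‖T1‖ ≤ y1 * (‖T2‖ + ‖T1 - T2‖) := by
        refine mul_le_mul_of_nonneg_left ?_ hy1.le
        calc ‖T1‖ = ‖T2 + (T1 - T2)‖ := by ring_nf
          _ ≤ ‖T2‖ + ‖T1 - T2‖ := norm_add_le _ _
    _ ≤ y1 * ‖T2‖ + (y2 - y1) * ‖T2‖ := by
        rw [mul_add]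
        exact add_le_add_right (le_trans (mul_le_mul_of_nonneg_left stepB hy1.le) key2) _
    _ = y2 * ‖T2‖ := by ring
end

section
/- Let S = A − cc' where A is a symmetric p×p real matrix and c ∈ ℝ^p, and let z ∈ ℂ with Im z = η > 0. Then |tr(Σ(A − z)^{-1}) − tr(Σ(S − z)^{-1})| ≤ ‖Σ‖/η for any symmetric positive-semidefinite matrix Σ. -/
open Matrix Complex BigOperators

lemma aux_herm (p : ℕ) (B : Matrix (Fin p) (Fin p) ℝ) (hB : B.IsSymm) :
    (B.map Complex.ofReal).IsHermitian := by
  ext i j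
  simp [conjTranspose_apply, map_apply, hB.apply i j]

lemma aux_sum_normSq_pos (p : ℕ) {v : Fin p → ℂ} (hv0 : v ≠ 0) :
    0 < ∑ i, Complex.normSq (v i) := by
  obtain ⟨i, hi⟩ := Function.ne_iff.mp hv0
  exact Finset.sum_pos' (fun j _ => Complex.normSq_nonneg _)
    ⟨i, Finset.mem_univ i, by simpa [Complex.normSq_pos] using hi⟩

lemma aux_star_dot_self (p : ℕ) (v : Fin p → ℂ) :
    star v ⬝ᵥ v = ((∑ i, Complex.normSq (v i) : ℝ) : ℂ) := by
  push_cast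
  simp [dotProduct, Complex.normSq_eq_conj_mul_self]

lemma aux_det_ne (p : ℕ) (B : Matrix (Fin p) (Fin p) ℝ) (hB : B.IsSymm)
    (z : ℂ) (hz : z.im ≠ 0) :
    IsUnit (B.map Complex.ofReal - z • (1 : Matrix (Fin p) (Fin p) ℂ)).det := by
  rw [isUnit_iff_ne_zero]
  intro hdet
  obtain ⟨v, hv0, hv⟩ := (Matrix.exists_mulVec_eq_zero_iff).mpr hdet
  have hBv : (B.map Complex.ofReal).mulVec v = z • v := by
    rwa [sub_mulVec, smul_mulVec, one_mulVec, sub_eq_zero] at hv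
  set M := B.map Complex.ofReal with hM
  set q := star v ⬝ᵥ M.mulVec v with hq
  have hq1 : q = z * ((∑ i, Complex.normSq (v i) : ℝ) : ℂ) := by
    rw [hq, hBv, dotProduct_smul, smul_eq_mul, aux_star_dot_self]
  have hq2 : star q = q := by
    have h1 : star q = star (M *ᵥ v) ⬝ᵥ v := by
      rw [hq, star_dotProduct, star_star]
    rw [h1, star_mulVec, (aux_herm p B hB : Mᴴ = M), ← dotProduct_mulVec]
  have him : q.im = 0 := by
    have := congrArg Complex.im hq2
    simp [Complex.star_def, Complex.conj_im] at this
    linarith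
  rw [hq1] at him
  simp [Complex.mul_im] at him
  rcases him with h | h
  · exact hz h
  · exact absurd h (ne_of_gt (aux_sum_normSq_pos p hv0))

lemma aux_opnorm (p : ℕ) (Sg : Matrix (Fin p) (Fin p) ℝ) (x : Fin p → ℝ) :
    ∑ i, (Sg.mulVec x i)^2 ≤ ‖Matrix.toEuclideanCLM (𝕜 := ℝ) Sg‖^2 * ∑ i, (x i)^2 := by
  have h := (Matrix.toEuclideanCLM (𝕜 := ℝ) Sg).le_opNorm ((WithLp.equiv 2 (Fin p → ℝ)).symm x)
  change ‖(WithLp.equiv 2 (Fin p → ℝ)).symm (Sg.mulVec x)‖ ≤ _ at h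
  have h1 : ‖(WithLp.equiv 2 (Fin p → ℝ)).symm (Sg.mulVec x)‖
      = Real.sqrt (∑ i, (Sg.mulVec x i)^2) := by
    rw [EuclideanSpace.norm_eq]
    simp [sq_abs]
  have h2 : ‖(WithLp.equiv 2 (Fin p → ℝ)).symm x‖ = Real.sqrt (∑ i, (x i)^2) := by
    rw [EuclideanSpace.norm_eq]
    simp [sq_abs]
  rw [h1, h2] at h
  have hn1 : (0:ℝ) ≤ ∑ i, (Sg.mulVec x i)^2 := Finset.sum_nonneg fun i _ => sq_nonneg _
  have hn2 : (0:ℝ) ≤ ∑ i, (x i)^2 := Finset.sum_nonneg fun i _ => sq_nonneg _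
  calc ∑ i, (Sg.mulVec x i)^2 = Real.sqrt (∑ i, (Sg.mulVec x i)^2) ^ 2 := (Real.sq_sqrt hn1).symm
    _ ≤ (‖Matrix.toEuclideanCLM (𝕜 := ℝ) Sg‖ * Real.sqrt (∑ i, (x i)^2))^2 :=
        pow_le_pow_left₀ (Real.sqrt_nonneg _) h 2
    _ = ‖Matrix.toEuclideanCLM (𝕜 := ℝ) Sg‖^2 * ∑ i, (x i)^2 := by
        rw [mul_pow, Real.sq_sqrt hn2]

lemma aux_mulVec_normSq (p : ℕ) (Sg : Matrix (Fin p) (Fin p) ℝ) (v : Fin p → ℂ) :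
    ∑ i, Complex.normSq (((Sg.map Complex.ofReal).mulVec v) i)
      ≤ ‖Matrix.toEuclideanCLM (𝕜 := ℝ) Sg‖^2 * ∑ i, Complex.normSq (v i) := by
  have hre : ∀ i, (((Sg.map Complex.ofReal).mulVec v) i).re
      = Sg.mulVec (fun j => (v j).re) i := by
    intro i
    simp [mulVec, dotProduct, Complex.re_sum, map_apply]
  have him : ∀ i, (((Sg.map Complex.ofReal).mulVec v) i).im
      = Sg.mulVec (fun j => (v j).im) i := by
    intro i
    simp [mulVec, dotProduct, Complex.im_sum, map_apply]
  have key : ∑ i, Complex.normSq (((Sg.map Complex.ofReal).mulVec v) i)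
      = (∑ i, (Sg.mulVec (fun j => (v j).re) i)^2) + ∑ i, (Sg.mulVec (fun j => (v j).im) i)^2 := by
    rw [← Finset.sum_add_distrib]
    congr 1; ext i
    rw [Complex.normSq_apply, hre, him]; ring
  rw [key]
  have h1 := aux_opnorm p Sg (fun j => (v j).re)
  have h2 := aux_opnorm p Sg (fun j => (v j).im)
  have : ∑ i, Complex.normSq (v i) = (∑ i, ((v i).re)^2) + ∑ i, ((v i).im)^2 := by
    rw [← Finset.sum_add_distrib]
    congr 1; ext i
    rw [Complex.normSq_apply]; ring
  rw [this, mul_add]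
  exact add_le_add h1 h2

lemma aux_cauchy (p : ℕ) (v w : Fin p → ℂ) :
    ‖v ⬝ᵥ w‖ ≤
      Real.sqrt (∑ i, Complex.normSq (v i)) * Real.sqrt (∑ i, Complex.normSq (w i)) := by
  have h1 : ‖v ⬝ᵥ w‖ ≤ ∑ i, ‖v i‖ * ‖w i‖ := by
    refine le_trans (norm_sum_le Finset.univ _) ?_
    simp [norm_mul, dotProduct]
  refine h1.trans ?_
  rw [← Real.sqrt_mul (Finset.sum_nonneg fun i _ => Complex.normSq_nonneg _)]
  rw [Real.le_sqrt (Finset.sum_nonneg fun i _ => mul_nonneg (norm_nonneg _) (norm_nonneg _))]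
  calc (∑ i, ‖v i‖ * ‖w i‖)^2
      ≤ (∑ i, ‖v i‖^2) * (∑ i, ‖w i‖^2) :=
        Finset.sum_mul_sq_le_sq_mul_sq Finset.univ _ _
    _ = (∑ i, Complex.normSq (v i)) * (∑ i, Complex.normSq (w i)) := by
        simp [Complex.sq_norm]
  exact mul_nonneg (Finset.sum_nonneg fun i _ => Complex.normSq_nonneg _) (Finset.sum_nonneg fun i _ => Complex.normSq_nonneg _)

section helpers
variable {p : ℕ}

lemma aux_mul_vmv (X : Matrix (Fin p) (Fin p) ℂ) (a b : Fin p → ℂ) :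
    X * vecMulVec a b = vecMulVec (X.mulVec a) b := by
  ext i j
  simp [mul_apply, vecMulVec_apply, mulVec, dotProduct, Finset.sum_mul, mul_assoc]

lemma aux_vmv_mul (X : Matrix (Fin p) (Fin p) ℂ) (a b : Fin p → ℂ) :
    vecMulVec a b * X = vecMulVec a (X.transpose.mulVec b) := by
  ext i j
  simp [mul_apply, vecMulVec_apply, mulVec, dotProduct, Finset.mul_sum, transpose_apply]
  congr 1; ext k; ring

lemma aux_vmv_vmv (a b u w : Fin p → ℂ) :
    vecMulVec a b * vecMulVec u w = (b ⬝ᵥ u) • vecMulVec a w := by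
  ext i j
  simp [mul_apply, vecMulVec_apply, dotProduct, Finset.sum_mul, Finset.mul_sum]
  congr 1; ext k; ring

lemma aux_trace_vmv (X : Matrix (Fin p) (Fin p) ℂ) (a b : Fin p → ℂ) :
    (X * vecMulVec a b).trace = b ⬝ᵥ X.mulVec a := by
  simp only [trace, diag_apply, mul_apply, vecMulVec_apply, dotProduct, mulVec, Finset.mul_sum]
  congr 1; ext i; congr 1; ext j; ring

end helpers

theorem main_aux
    (p : ℕ) (A : Matrix (Fin p) (Fin p) ℝ) (hA : A.IsSymm)
    (c : Fin p → ℝ)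
    (Sg : Matrix (Fin p) (Fin p) ℝ) (hSgsym : Sg.IsSymm) (hSgpsd : Sg.PosSemidef)
    (z : ℂ) (η : ℝ) (hη : 0 < η) (hz : z.im = η) :
    ‖
        ((Sg.map (Complex.ofReal) * (A.map (Complex.ofReal) - z • (1 : Matrix (Fin p) (Fin p) ℂ))⁻¹).trace -
         (Sg.map (Complex.ofReal) * ((A - Matrix.vecMulVec c c).map (Complex.ofReal) - z • (1 : Matrix (Fin p) (Fin p) ℂ))⁻¹).trace)‖
      ≤ ‖Matrix.toEuclideanCLM (𝕜 := ℝ) Sg‖ / η := by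
  have hzne : z.im ≠ 0 := by rw [hz]; exact ne_of_gt hη
  set S : Matrix (Fin p) (Fin p) ℝ := A - Matrix.vecMulVec c c with hSdef
  have hccsym : (Matrix.vecMulVec c c).IsSymm := by
    ext i j; simp [vecMulVec_apply, mul_comm]
  have hSsym : S.IsSymm := by
    unfold Matrix.IsSymm
    rw [hSdef, transpose_sub, hA, hccsym]
  set cC : Fin p → ℂ := fun i => (c i : ℂ) with hcC
  set M : Matrix (Fin p) (Fin p) ℂ := S.map Complex.ofReal - z • 1 with hMdef
  set N : Matrix (Fin p) (Fin p) ℂ := A.map Complex.ofReal - z • 1 with hNdef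
  set C : Matrix (Fin p) (Fin p) ℂ := vecMulVec cC cC with hCdef
  have hCmap : (Matrix.vecMulVec c c).map Complex.ofReal = C := by
    ext i j; simp [hCdef, vecMulVec_apply, map_apply, hcC]
  have hNM : N = M + C := by
    rw [hNdef, hMdef, hSdef, Matrix.map_sub _ (fun a b => by push_cast; ring), hCmap]; abel
  have hMdet : IsUnit M.det := aux_det_ne p S hSsym z hzne
  have hNdet : IsUnit N.det := aux_det_ne p A hA z hzne
  set R : Matrix (Fin p) (Fin p) ℂ := M⁻¹ with hRdef
  have hMR : M * R = 1 := Matrix.mul_nonsing_inv M hMdet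
  have hmapsymm : (S.map Complex.ofReal)ᵀ = S.map Complex.ofReal := by
    rw [← Matrix.transpose_map, hSsym]
  have hMsymm : Mᵀ = M := by
    rw [hMdef, transpose_sub, transpose_smul, transpose_one, hmapsymm]
  have hRsymm : Rᵀ = R := by
    rw [hRdef, Matrix.transpose_nonsing_inv, hMsymm]
  set v : Fin p → ℂ := R.mulVec cC with hvdef
  have hMv : M.mulVec v = cC := by
    rw [hvdef, Matrix.mulVec_mulVec, hMR, Matrix.one_mulVec]
  set β : ℂ := cC ⬝ᵥ v with hβdef
  set Nv : ℝ := ∑ i, Complex.normSq (v i) with hNvdef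
  -- conjugate matrix
  set Mb : Matrix (Fin p) (Fin p) ℂ := S.map Complex.ofReal - (starRingEnd ℂ z) • 1 with hMbdef
  have hMH : Mᴴ = Mb := by
    rw [hMdef, conjTranspose_sub, (aux_herm p S hSsym : (S.map Complex.ofReal)ᴴ = _),
      conjTranspose_smul, conjTranspose_one, hMbdef]
    rfl
  have hMbsymm : Mbᵀ = Mb := by
    rw [hMbdef, transpose_sub, transpose_smul, transpose_one, hmapsymm]
  have hstarc : star cC = cC := by
    funext i; simp [hcC]
  have hMbv : Mb.mulVec (star v) = cC := by
    have h := congrArg star hMv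
    rw [star_mulVec, hMH, hstarc] at h
    rw [← h, ← hMbsymm, Matrix.vecMul_transpose, hMbsymm]
  have hβ1 : β = star v ⬝ᵥ Mb.mulVec v := by
    calc β = (Mb.mulVec (star v)) ⬝ᵥ v := by rw [hMbv, hβdef]
      _ = v ⬝ᵥ Mb.mulVec (star v) := dotProduct_comm _ _
      _ = (v ᵥ* Mb) ⬝ᵥ star v := dotProduct_mulVec _ _ _
      _ = (Mb.mulVec v) ⬝ᵥ star v := by rw [← Matrix.vecMul_transpose, hMbsymm]
      _ = star v ⬝ᵥ Mb.mulVec v := dotProduct_comm _ _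
  have hstarβ : star β = star v ⬝ᵥ M.mulVec v := by
    rw [hβdef, ← star_dotProduct_star, hstarc, ← hMv]
  have hdiff : β - star β = (z - starRingEnd ℂ z) * ((Nv : ℝ) : ℂ) := by
    rw [hstarβ, hβ1, ← dotProduct_sub, ← Matrix.sub_mulVec]
    have hMbM : Mb - M = (z - starRingEnd ℂ z) • (1 : Matrix (Fin p) (Fin p) ℂ) := by
      rw [hMbdef, hMdef, sub_smul]; abel
    rw [hMbM, Matrix.smul_mulVec, Matrix.one_mulVec, dotProduct_smul, smul_eq_mul,
      aux_star_dot_self p v, hNvdef]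
  have hβim : β.im = η * Nv := by
    have h2 := congrArg Complex.im hdiff
    simp only [Complex.sub_im, Complex.mul_im, Complex.sub_re, Complex.conj_re, Complex.conj_im,
      Complex.ofReal_im, Complex.ofReal_re, Complex.star_def] at h2
    rw [hz] at h2
    linarith
  have hNvnonneg : 0 ≤ Nv := Finset.sum_nonneg fun i _ => Complex.normSq_nonneg _
  by_cases hNv0 : Nv = 0
  · -- v = 0, hence c = 0, difference vanishes
    have hv0 : v = 0 := by
      funext i
      have := (Finset.sum_eq_zero_iff_of_nonneg
        (fun j (_ : j ∈ Finset.univ) => Complex.normSq_nonneg (v j))).mp hNv0 i (Finset.mem_univ i)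
      exact Complex.normSq_eq_zero.mp this
    have hcC0 : cC = 0 := by
      rw [← hMv, hv0, Matrix.mulVec_zero]
    have hC0 : C = 0 := by
      rw [hCdef, hcC0]
      ext i j; simp [vecMulVec_apply]
    have hNMeq : N = M := by rw [hNM, hC0, add_zero]
    rw [hNMeq, sub_self, norm_zero]
    positivity
  have hNvpos : 0 < Nv := lt_of_le_of_ne hNvnonneg (Ne.symm hNv0)
  have h1βim : (1 + β).im = η * Nv := by
    rw [Complex.add_im, Complex.one_im, zero_add, hβim]
  have habs : η * Nv ≤ ‖1 + β‖ := by
    have h := Complex.abs_im_le_norm (1 + β)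
    rw [h1βim] at h
    exact le_trans (le_abs_self _) h
  have hβne : (1 : ℂ) + β ≠ 0 := by
    intro h
    rw [h] at h1βim
    simp only [Complex.zero_im] at h1βim
    nlinarith
  set s : ℂ := (1 + β)⁻¹ with hsdef
  have hCR : C * R = vecMulVec cC v := by
    rw [hCdef, aux_vmv_mul, hRsymm, ← hvdef]
  have hCRC : C * R * C = β • C := by
    rw [hCR, hCdef, aux_vmv_vmv, dotProduct_comm v cC, ← hβdef]
  set X : Matrix (Fin p) (Fin p) ℂ := R - s • (R * (C * R)) with hXdef
  have hNX : N * X = 1 := by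
    rw [hNM, hXdef, add_mul, mul_sub, mul_sub, Matrix.mul_smul, Matrix.mul_smul,
        ← Matrix.mul_assoc M R, hMR, Matrix.one_mul]
    have hc : C * (R * (C * R)) = β • (C * R) := by
      calc C * (R * (C * R)) = (C * R * C) * R := by
            rw [Matrix.mul_assoc (C*R) C R, Matrix.mul_assoc]
        _ = (β • C) * R := by rw [hCRC]
        _ = β • (C * R) := by rw [Matrix.smul_mul]
    rw [hc, smul_smul]
    have hsβ : s * β = 1 - s := by
      rw [hsdef]
      have h := inv_mul_cancel₀ hβne
      linear_combination h
    rw [hsβ, sub_smul, one_smul]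
    abel
  have hNinv : N⁻¹ = X := Matrix.inv_eq_right_inv hNX
  have hRCR : R * (C * R) = vecMulVec v v := by
    rw [hCR, aux_mul_vmv, ← hvdef]
  set Q : ℂ := v ⬝ᵥ (Sg.map Complex.ofReal).mulVec v with hQdef
  have htr : (Sg.map Complex.ofReal * N⁻¹).trace - (Sg.map Complex.ofReal * M⁻¹).trace
      = -(s * Q) := by
    rw [hNinv, hXdef, hRCR, mul_sub, Matrix.mul_smul, trace_sub, trace_smul, aux_trace_vmv,
      ← hRdef, ← hQdef, smul_eq_mul]
    ring
  rw [htr, norm_neg, norm_mul, norm_inv]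
  -- bound on |Q|
  have hQbound : ‖Q‖ ≤ ‖Matrix.toEuclideanCLM (𝕜 := ℝ) Sg‖ * Nv := by
    have h1 := aux_cauchy p v ((Sg.map Complex.ofReal).mulVec v)
    rw [hQdef]
    refine h1.trans ?_
    have h2 : Real.sqrt (∑ i, Complex.normSq (((Sg.map Complex.ofReal).mulVec v) i))
        ≤ ‖Matrix.toEuclideanCLM (𝕜 := ℝ) Sg‖ * Real.sqrt Nv := by
      have h3 := aux_mulVec_normSq p Sg v
      have h4 : Real.sqrt (∑ i, Complex.normSq (((Sg.map Complex.ofReal).mulVec v) i))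
          ≤ Real.sqrt (‖Matrix.toEuclideanCLM (𝕜 := ℝ) Sg‖^2 * Nv) := by
        apply Real.sqrt_le_sqrt
        rw [hNvdef]
        exact h3
      refine h4.trans_eq ?_
      rw [Real.sqrt_mul (sq_nonneg _), Real.sqrt_sq (norm_nonneg _)]
    calc Real.sqrt Nv * Real.sqrt (∑ i, Complex.normSq (((Sg.map Complex.ofReal).mulVec v) i))
        ≤ Real.sqrt Nv * (‖Matrix.toEuclideanCLM (𝕜 := ℝ) Sg‖ * Real.sqrt Nv) := by
          exact mul_le_mul_of_nonneg_left h2 (Real.sqrt_nonneg _)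
      _ = ‖Matrix.toEuclideanCLM (𝕜 := ℝ) Sg‖ * (Real.sqrt Nv * Real.sqrt Nv) := by ring
      _ = ‖Matrix.toEuclideanCLM (𝕜 := ℝ) Sg‖ * Nv := by
          rw [Real.mul_self_sqrt hNvnonneg]
  have hinvbound : (‖1 + β‖)⁻¹ ≤ (η * Nv)⁻¹ := by
    apply inv_anti₀
    · positivity
    · exact habs
  calc (‖1 + β‖)⁻¹ * ‖Q‖
      ≤ (η * Nv)⁻¹ * (‖Matrix.toEuclideanCLM (𝕜 := ℝ) Sg‖ * Nv) := by
        exact mul_le_mul hinvbound hQbound (norm_nonneg _)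
          (inv_nonneg.mpr (mul_nonneg hη.le hNvnonneg))
    _ = ‖Matrix.toEuclideanCLM (𝕜 := ℝ) Sg‖ / η := by
        rw [mul_inv, div_eq_mul_inv]
        have h5 : Nv⁻¹ * Nv = 1 := inv_mul_cancel₀ (ne_of_gt hNvpos)
        calc η⁻¹ * Nv⁻¹ * (‖Matrix.toEuclideanCLM (𝕜 := ℝ) Sg‖ * Nv)
            = ‖Matrix.toEuclideanCLM (𝕜 := ℝ) Sg‖ * η⁻¹ * (Nv⁻¹ * Nv) := by ring
          _ = ‖Matrix.toEuclideanCLM (𝕜 := ℝ) Sg‖ * η⁻¹ := by rw [h5, mul_one]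

/-- rank-one resolvent perturbation, Silverstein–Bai: if `S = A − cc'`
with `A` symmetric real and `z = x + iη`, `η > 0`, then for any symmetric PSD `Σ`,
`|tr(Σ(A − z)⁻¹) − tr(Σ(S − z)⁻¹)| ≤ ‖Σ‖/η`. -/
theorem rank_one_resolvent_trace_perturbation
    (p : ℕ) (A : Matrix (Fin p) (Fin p) ℝ) (hA : A.IsSymm)
    (c : Fin p → ℝ)
    (Sg : Matrix (Fin p) (Fin p) ℝ) (hSgsym : Sg.IsSymm) (hSgpsd : Sg.PosSemidef)
    (z : ℂ) (η : ℝ) (hη : 0 < η) (hz : z.im = η) :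
    letI S : Matrix (Fin p) (Fin p) ℝ := A - Matrix.vecMulVec c c
    ‖
        ((Sg.map (Complex.ofReal) * (A.map (Complex.ofReal) - z • (1 : Matrix (Fin p) (Fin p) ℂ))⁻¹).trace -
         (Sg.map (Complex.ofReal) * (S.map (Complex.ofReal) - z • (1 : Matrix (Fin p) (Fin p) ℂ))⁻¹).trace)‖
      ≤ ‖Matrix.toEuclideanCLM (𝕜 := ℝ) Sg‖ / η :=
  main_aux p A hA c Sg hSgsym hSgpsd z η hη hz
end
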